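/- Let λ be a root of unity of algebraic degree 4 over ℚ satisfying λ² − aλ − b = 0, where a, b both lie in ℚ(√(−1)) or both lie in ℚ(√(−3)). If b ∈ {√(−1), −√(−1), (1+√(−3))/2, (1−√(−3))/2}, then a = 0. If b = (−1±√(−3))/2, then no such a exists. -/

import Mathlib

open Polynomial


instance : Fact (Nat.Prime 5) := ⟨by norm_num⟩

lemma cyc5 : cyclotomic 5 ℚ = X^4 + X^3 + X^2 + X + 1 := by
  rw [cyclotomic_prime ℚ 5]
  simp [Finset.sum_range_succ]; ring

lemma cyc8 : cyclotomic 8 ℚ = X^4 + 1 := by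
  have h := cyclotomic_prime_pow_eq_geom_sum (R := ℚ) (p := 2) (n := 2) Nat.prime_two
  norm_num at h
  rw [h]

lemma cyc3 : cyclotomic 3 ℚ = X^2 + X + 1 := by
  rw [cyclotomic_prime ℚ 3]
  simp [Finset.sum_range_succ]; ring

lemma cyc6 : cyclotomic 6 ℚ = X^2 - X + 1 := by
  have h := cyclotomic_expand_eq_cyclotomic_mul (R := ℚ) Nat.prime_two (by norm_num : ¬ (2:ℕ) ∣ 3)
  rw [cyc3] at h
  norm_num at h
  apply mul_right_cancel₀ (b := cyclotomic 3 ℚ) (cyclotomic_ne_zero 3 ℚ)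
  rw [cyc3, ← h, cyclotomic_six]
  ring

lemma cyc10 : cyclotomic 10 ℚ = X^4 - X^3 + X^2 - X + 1 := by
  have h := cyclotomic_expand_eq_cyclotomic_mul (R := ℚ) Nat.prime_two (by norm_num : ¬ (2:ℕ) ∣ 5)
  rw [cyc5] at h
  norm_num at h
  apply mul_right_cancel₀ (b := cyclotomic 5 ℚ) (cyclotomic_ne_zero 5 ℚ)
  rw [cyc5, ← h]
  ring

lemma cyc12 : cyclotomic 12 ℚ = X^4 - X^2 + 1 := by
  have h := cyclotomic_expand_eq_cyclotomic (R := ℚ) Nat.prime_two (by norm_num : (2:ℕ) ∣ 6)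
  rw [cyc6] at h
  norm_num at h
  rw [← h]
  ring

lemma totient4 (m : ℕ) (hm : 0 < m) (h : Nat.totient m = 4) :
    m = 5 ∨ m = 8 ∨ m = 10 ∨ m = 12 := by
  have hdvd : m ∣ 120 := by
    rw [Nat.dvd_iff_prime_pow_dvd_dvd]
    intro p k hp hdvdk
    rcases Nat.eq_zero_or_pos k with rfl | hk
    · simpa using one_dvd _
    have htot : Nat.totient (p ^ k) ∣ 4 := h ▸ Nat.totient_dvd_of_dvd hdvdk
    rw [Nat.totient_prime_pow hp hk] at htot
    have h1 : p ^ (k-1) * (p - 1) ≤ 4 := Nat.le_of_dvd (by norm_num) htot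
    have hp2 : 2 ≤ p := hp.two_le
    have hple : p ≤ 5 := by
      have h2 : 1 ≤ p ^ (k-1) := Nat.one_le_pow _ _ (by omega)
      have h3 : p - 1 ≤ p ^ (k-1) * (p - 1) := Nat.le_mul_of_pos_left _ (by omega)
      omega
    interval_cases p
    · have h4 : 2 ^ (k-1) ≤ 4 := by omega
      have hk3 : k ≤ 3 := by
        by_contra hc
        have : 2^3 ≤ 2^(k-1) := Nat.pow_le_pow_right (by norm_num) (by omega)
        omega
      exact dvd_trans (pow_dvd_pow 2 hk3) (by norm_num)
    · have hk1 : k ≤ 1 := by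
        by_contra hc
        have : 3^1 ≤ 3^(k-1) := Nat.pow_le_pow_right (by norm_num) (by omega)
        omega
      exact dvd_trans (pow_dvd_pow 3 hk1) (by norm_num)
    · exact absurd hp (by norm_num)
    · have hk1 : k ≤ 1 := by
        by_contra hc
        have : 5^1 ≤ 5^(k-1) := Nat.pow_le_pow_right (by norm_num) (by omega)
        omega
      exact dvd_trans (pow_dvd_pow 5 hk1) (by norm_num)
  have hle : m ≤ 120 := Nat.le_of_dvd (by norm_num) hdvd
  revert h
  have : m < 121 := by omega
  revert this
  clear hdvd hle hm
  revert m
  decide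

lemma coeffs (lam : ℂ) (hroot : ∃ n : ℕ, 0 < n ∧ lam ^ n = 1)
    (hdeg : (minpoly ℚ lam).natDegree = 4)
    (c3 c2 c1 c0 : ℚ)
    (haev : lam^4 + (c3:ℂ)*lam^3 + (c2:ℂ)*lam^2 + (c1:ℂ)*lam + (c0:ℂ) = 0) :
    (c3 = 1 ∧ c2 = 1 ∧ c1 = 1 ∧ c0 = 1) ∨ (c3 = -1 ∧ c2 = 1 ∧ c1 = -1 ∧ c0 = 1) ∨
    (c3 = 0 ∧ c2 = -1 ∧ c1 = 0 ∧ c0 = 1) ∨ (c3 = 0 ∧ c2 = 0 ∧ c1 = 0 ∧ c0 = 1) := by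
  obtain ⟨n, hn, hlam⟩ := hroot
  have hfin : IsOfFinOrder lam := isOfFinOrder_iff_pow_eq_one.mpr ⟨n, hn, hlam⟩
  have hm : 0 < orderOf lam := hfin.orderOf_pos
  have hprim : IsPrimitiveRoot lam (orderOf lam) := IsPrimitiveRoot.orderOf lam
  have hcyc : cyclotomic (orderOf lam) ℚ = minpoly ℚ lam :=
    Polynomial.cyclotomic_eq_minpoly_rat hprim hm
  have htot : Nat.totient (orderOf lam) = 4 := by
    have := natDegree_cyclotomic (orderOf lam) ℚ
    rw [hcyc, hdeg] at this
    omega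
  set P : ℚ[X] := X^4 + C c3 * X^3 + C c2 * X^2 + C c1 * X + C c0 with hP
  have hPdeg : P.natDegree = 4 := by rw [hP]; compute_degree!
  have hPmon : P.Monic := by rw [hP]; monicity!
  have haevP : aeval lam P = 0 := by
    rw [hP]
    simp only [map_add, map_mul, map_pow, aeval_X, aeval_C, Complex.coe_algebraMap, eq_ratCast]
    push_cast
    convert haev using 2
  have hint : IsIntegral ℚ lam :=
    ⟨X^n - C 1, monic_X_pow_sub_C 1 (by omega), by simp [hlam, sub_eq_zero]⟩
  have hdvd : minpoly ℚ lam ∣ P := minpoly.dvd ℚ lam haevP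
  have hPeq : P = minpoly ℚ lam :=
    eq_of_monic_of_dvd_of_natDegree_le (minpoly.monic hint)
      hPmon hdvd (by omega)
  have hPcyc : P = cyclotomic (orderOf lam) ℚ := hPeq.trans hcyc.symm
  have key : ∀ d3 d2 d1 d0 : ℚ, P = X^4 + C d3 * X^3 + C d2 * X^2 + C d1 * X + C d0 →
      c3 = d3 ∧ c2 = d2 ∧ c1 = d1 ∧ c0 = d0 := by
    intro d3 d2 d1 d0 h
    rw [hP] at h
    refine ⟨?_, ?_, ?_, ?_⟩
    · have := congrArg (fun f => coeff f 3) h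
      simpa using this
    · have := congrArg (fun f => coeff f 2) h
      simpa using this
    · have := congrArg (fun f => coeff f 1) h
      simpa using this
    · have := congrArg (fun f => coeff f 0) h
      simpa using this
  rcases totient4 _ hm htot with h5 | h8 | h10 | h12
  · left
    exact key 1 1 1 1 (by rw [hPcyc, h5, cyc5]; simp)
  · right; right; right
    exact key 0 0 0 1 (by rw [hPcyc, h8, cyc8]; simp)
  · right; left
    exact key (-1) 1 (-1) 1 (by rw [hPcyc, h10, cyc10]; simp; ring)
  · right; right; left
    exact key 0 (-1) 0 1 (by rw [hPcyc, h12, cyc12]; simp; ring)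

lemma quad_coeffs (lam δ : ℂ) (e xa ya xb yb : ℚ)
    (hroot : ∃ n : ℕ, 0 < n ∧ lam ^ n = 1)
    (hdeg : (minpoly ℚ lam).natDegree = 4)
    (hδ : δ^2 = -((e:ℚ):ℂ))
    (heq : lam ^ 2 - ((xa:ℂ) + (ya:ℂ)*δ) * lam - ((xb:ℂ) + (yb:ℂ)*δ) = 0) :
    (-2*xa = 1 ∧ xa^2+e*ya^2-2*xb = 1 ∧ 2*(xa*xb+e*ya*yb) = 1 ∧ xb^2+e*yb^2 = 1) ∨
    (-2*xa = -1 ∧ xa^2+e*ya^2-2*xb = 1 ∧ 2*(xa*xb+e*ya*yb) = -1 ∧ xb^2+e*yb^2 = 1) ∨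
    (-2*xa = 0 ∧ xa^2+e*ya^2-2*xb = -1 ∧ 2*(xa*xb+e*ya*yb) = 0 ∧ xb^2+e*yb^2 = 1) ∨
    (-2*xa = 0 ∧ xa^2+e*ya^2-2*xb = 0 ∧ 2*(xa*xb+e*ya*yb) = 0 ∧ xb^2+e*yb^2 = 1) := by
  apply coeffs lam hroot hdeg (-2*xa) (xa^2+e*ya^2-2*xb) (2*(xa*xb+e*ya*yb)) (xb^2+e*yb^2)
  push_cast
  linear_combination (lam^2 - ((xa:ℂ) - (ya:ℂ)*δ)*lam - ((xb:ℂ) - (yb:ℂ)*δ)) * heq +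
    ((ya:ℂ)^2*lam^2 + 2*(ya:ℂ)*(yb:ℂ)*lam + (yb:ℂ)^2) * hδ
lemma sqrt3_irr (q : ℚ) : (q:ℝ) ≠ Real.sqrt 3 := by
  intro h
  exact (Nat.Prime.irrational_sqrt (by norm_num : Nat.Prime 3)) ⟨q, by exact_mod_cast h⟩

lemma sqrt3_ne_zero : Real.sqrt 3 ≠ 0 :=
  ne_of_gt (Real.sqrt_pos.mpr (by norm_num))

lemma hdel1 : Complex.I^2 = -(((1:ℚ)):ℂ) := by norm_num [Complex.I_sq]

lemma hdel3 : (((Real.sqrt 3 : ℝ):ℂ) * Complex.I)^2 = -(((3:ℚ)):ℂ) := by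
  rw [mul_pow, Complex.I_sq, ← Complex.ofReal_pow, Real.sq_sqrt (by norm_num : (0:ℝ) ≤ 3)]
  norm_num

set_option maxHeartbeats 2000000 in
theorem stmt_3 (lam a b : ℂ)
    (hroot : ∃ n : ℕ, 0 < n ∧ lam ^ n = 1)
    (hdeg : (minpoly ℚ lam).natDegree = 4)
    (heq : lam ^ 2 - a * lam - b = 0)
    (hfield :
      ((∃ x y : ℚ, a = (x : ℂ) + (y : ℂ) * Complex.I) ∧
        (∃ x y : ℚ, b = (x : ℂ) + (y : ℂ) * Complex.I)) ∨
      ((∃ x y : ℚ, a = (x : ℂ) + (y : ℂ) * ((Real.sqrt 3 : ℝ) * Complex.I)) ∧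
        (∃ x y : ℚ, b = (x : ℂ) + (y : ℂ) * ((Real.sqrt 3 : ℝ) * Complex.I)))) :
    ((b = Complex.I ∨ b = -Complex.I ∨
        b = (1 + (Real.sqrt 3 : ℝ) * Complex.I) / 2 ∨
        b = (1 - (Real.sqrt 3 : ℝ) * Complex.I) / 2) → a = 0) ∧
    ((b = (-1 + (Real.sqrt 3 : ℝ) * Complex.I) / 2 ∨
        b = (-1 - (Real.sqrt 3 : ℝ) * Complex.I) / 2) → False) := by
  constructor
  · intro hb
    rcases hfield with ⟨⟨xa, ya, ha⟩, ⟨xb, yb, hbm⟩⟩ | ⟨⟨xa, ya, ha⟩, ⟨xb, yb, hbm⟩⟩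
    · -- field ℚ(i)
      rw [ha, hbm] at heq
      have H := quad_coeffs lam Complex.I 1 xa ya xb yb hroot hdeg hdel1 heq
      rcases hb with h | h | h | h
      · -- b = I
        have hv : (xb:ℂ) + (yb:ℂ)*Complex.I = Complex.I := hbm.symm.trans h
        have hre := congrArg Complex.re hv
        have him := congrArg Complex.im hv
        simp at hre him
        have hxb : xb = 0 := by exact_mod_cast hre
        have hyb : yb = 1 := by exact_mod_cast him
        subst hxb hyb
        clear heq hbm hv hre him h
        rcases H with ⟨h1,h2,h3,h4⟩|⟨h1,h2,h3,h4⟩|⟨h1,h2,h3,h4⟩|⟨h1,h2,h3,h4⟩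
        · exfalso; nlinarith
        · exfalso; nlinarith
        · exfalso; nlinarith [sq_nonneg xa, sq_nonneg ya]
        · have hxa : xa = 0 := by linarith
          have hya2 : ya^2 = 0 := by nlinarith
          have hya : ya = 0 := by
            have := sq_eq_zero_iff.mp hya2; exact this
          rw [ha, hxa, hya]; simp
      · -- b = -I
        have hv : (xb:ℂ) + (yb:ℂ)*Complex.I = -Complex.I := hbm.symm.trans h
        have hre := congrArg Complex.re hv
        have him := congrArg Complex.im hv
        simp at hre him
        have hxb : xb = 0 := by exact_mod_cast hre
        have hyb : yb = -1 := by exact_mod_cast him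
        subst hxb hyb
        clear heq hbm hv hre him h
        rcases H with ⟨h1,h2,h3,h4⟩|⟨h1,h2,h3,h4⟩|⟨h1,h2,h3,h4⟩|⟨h1,h2,h3,h4⟩
        · exfalso; nlinarith
        · exfalso; nlinarith
        · exfalso; nlinarith [sq_nonneg xa, sq_nonneg ya]
        · have hxa : xa = 0 := by linarith
          have hya2 : ya^2 = 0 := by nlinarith
          have hya : ya = 0 := sq_eq_zero_iff.mp hya2
          rw [ha, hxa, hya]; simp
      · -- b = (1+√3 i)/2 : impossible in ℚ(i)
        exfalso
        have hv : (2:ℂ)*((xb:ℂ) + (yb:ℂ)*Complex.I) = 1 + (Real.sqrt 3 : ℝ) * Complex.I := by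
          rw [← hbm, h]; ring
        have him := congrArg Complex.im hv
        simp at him
        exact sqrt3_irr (2*yb) (by push_cast; linarith)
      · exfalso
        have hv : (2:ℂ)*((xb:ℂ) + (yb:ℂ)*Complex.I) = 1 - (Real.sqrt 3 : ℝ) * Complex.I := by
          rw [← hbm, h]; ring
        have him := congrArg Complex.im hv
        simp at him
        exact sqrt3_irr (-(2*yb)) (by push_cast; linarith)
    · -- field ℚ(√-3)
      rw [ha, hbm] at heq
      have H := quad_coeffs lam ((Real.sqrt 3 : ℝ) * Complex.I) 3 xa ya xb yb hroot hdeg hdel3 heq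
      rcases hb with h | h | h | h
      · -- b = I : impossible
        exfalso
        have hv : (xb:ℂ) + (yb:ℂ)*((Real.sqrt 3 : ℝ) * Complex.I) = Complex.I := hbm.symm.trans h
        have him := congrArg Complex.im hv
        simp at him
        have hyb : yb ≠ 0 := by
          intro h0; rw [h0] at him; simp at him
        exact sqrt3_irr (yb⁻¹) (by
          push_cast
          field_simp
          exact him.symm)
      · exfalso
        have hv : (xb:ℂ) + (yb:ℂ)*((Real.sqrt 3 : ℝ) * Complex.I) = -Complex.I := hbm.symm.trans h
        have him := congrArg Complex.im hv
        simp at him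
        have hyb : (yb:ℝ) ≠ 0 := by
          intro h0; rw [h0] at him; simp at him
        exact sqrt3_irr (-yb⁻¹) (by
          push_cast
          field_simp
          nlinarith [him, Real.sq_sqrt (by norm_num : (0:ℝ) ≤ 3)])
      · -- b = (1+√3i)/2
        have hv : (2:ℂ)*((xb:ℂ) + (yb:ℂ)*((Real.sqrt 3:ℝ) * Complex.I)) = 1 + (Real.sqrt 3 : ℝ) * Complex.I := by
          rw [← hbm, h]; ring
        have hre := congrArg Complex.re hv
        have him := congrArg Complex.im hv
        simp at hre him
        have hxb : xb = 1/2 := by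
          have : ((xb:ℚ):ℝ) = ((1/2:ℚ):ℝ) := by push_cast; linarith
          exact_mod_cast this
        have hyb : yb = 1/2 := by
          have h2 : ((2*yb:ℝ) - 1) * Real.sqrt 3 = 0 := by push_cast; linarith [him]
          rcases mul_eq_zero.mp h2 with h' | h'
          · have : ((yb:ℚ):ℝ) = ((1/2:ℚ):ℝ) := by push_cast; linarith
            exact_mod_cast this
          · exact absurd h' sqrt3_ne_zero
        subst hxb hyb
        clear heq hbm hv hre him h
        rcases H with ⟨h1,h2,h3,h4⟩|⟨h1,h2,h3,h4⟩|⟨h1,h2,h3,h4⟩|⟨h1,h2,h3,h4⟩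
        · exfalso; nlinarith
        · exfalso; nlinarith
        · have hxa : xa = 0 := by linarith
          have hya2 : ya^2 = 0 := by nlinarith
          have hya : ya = 0 := sq_eq_zero_iff.mp hya2
          rw [ha, hxa, hya]; simp
        · exfalso; nlinarith
      · -- b = (1-√3i)/2
        have hv : (2:ℂ)*((xb:ℂ) + (yb:ℂ)*((Real.sqrt 3:ℝ) * Complex.I)) = 1 - (Real.sqrt 3 : ℝ) * Complex.I := by
          rw [← hbm, h]; ring
        have hre := congrArg Complex.re hv
        have him := congrArg Complex.im hv
        simp at hre him
        have hxb : xb = 1/2 := by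
          have : ((xb:ℚ):ℝ) = ((1/2:ℚ):ℝ) := by push_cast; linarith
          exact_mod_cast this
        have hyb : yb = -1/2 := by
          have h2 : ((2*yb:ℝ) + 1) * Real.sqrt 3 = 0 := by push_cast; linarith [him]
          rcases mul_eq_zero.mp h2 with h' | h'
          · have : ((yb:ℚ):ℝ) = ((-1/2:ℚ):ℝ) := by push_cast; linarith
            exact_mod_cast this
          · exact absurd h' sqrt3_ne_zero
        subst hxb hyb
        clear heq hbm hv hre him h
        rcases H with ⟨h1,h2,h3,h4⟩|⟨h1,h2,h3,h4⟩|⟨h1,h2,h3,h4⟩|⟨h1,h2,h3,h4⟩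
        · exfalso; nlinarith
        · exfalso; nlinarith
        · have hxa : xa = 0 := by linarith
          have hya2 : ya^2 = 0 := by nlinarith
          have hya : ya = 0 := sq_eq_zero_iff.mp hya2
          rw [ha, hxa, hya]; simp
        · exfalso; nlinarith
  · intro hb
    rcases hfield with ⟨⟨xa, ya, ha⟩, ⟨xb, yb, hbm⟩⟩ | ⟨⟨xa, ya, ha⟩, ⟨xb, yb, hbm⟩⟩
    · rcases hb with h | h
      · have hv : (2:ℂ)*((xb:ℂ) + (yb:ℂ)*Complex.I) = -1 + (Real.sqrt 3 : ℝ) * Complex.I := by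
          rw [← hbm, h]; ring
        have him := congrArg Complex.im hv
        simp at him
        exact sqrt3_irr (2*yb) (by push_cast; linarith)
      · have hv : (2:ℂ)*((xb:ℂ) + (yb:ℂ)*Complex.I) = -1 - (Real.sqrt 3 : ℝ) * Complex.I := by
          rw [← hbm, h]; ring
        have him := congrArg Complex.im hv
        simp at him
        exact sqrt3_irr (-(2*yb)) (by push_cast; linarith)
    · rw [ha, hbm] at heq
      have H := quad_coeffs lam ((Real.sqrt 3 : ℝ) * Complex.I) 3 xa ya xb yb hroot hdeg hdel3 heq
      have hxb : xb = -1/2 := by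
        rcases hb with h | h <;>
        · have hv : (2:ℂ)*((xb:ℂ) + (yb:ℂ)*((Real.sqrt 3:ℝ) * Complex.I)) = (2:ℂ)*b := by
            rw [← hbm]
          rw [h] at hv
          have hre := congrArg Complex.re hv
          simp at hre
          have : ((xb:ℚ):ℝ) = ((-1/2:ℚ):ℝ) := by
            push_cast at hre ⊢
            linarith
          exact_mod_cast this
      subst hxb
      clear heq hbm hb
      rcases H with ⟨h1,h2,h3,h4⟩|⟨h1,h2,h3,h4⟩|⟨h1,h2,h3,h4⟩|⟨h1,h2,h3,h4⟩
      · clear h3 h4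
        have hxa : xa = -1/2 := by linarith
        subst hxa
        nlinarith [sq_nonneg ya]
      · clear h3 h4
        have hxa : xa = 1/2 := by linarith
        subst hxa
        nlinarith [sq_nonneg ya]
      · clear h1 h3 h4
        nlinarith [sq_nonneg xa, sq_nonneg ya]
      · clear h1 h3 h4
        nlinarith [sq_nonneg xa, sq_nonneg ya]
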